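/- Let N ≥ 1, a > 0, and for t = 1,…,T let z_t ∈ ℝ^N and n_t ∈ {0,1}. Define A_0 = a·I and A_t = A_{t−1} + n_t z_t z_tᵀ. Then Σ_{t=1}^T n_t · z_tᵀ A_t^{−1} z_t ≤ ln(det(A_T) / a^N) ≤ N · ln(1 + (Σ_{t=1}^T n_t ‖z_t‖²) / (a N)). -/

import Mathlib

open Finset Matrix

private lemma det_add_vecMulVec' {N : ℕ} (B : Matrix (Fin N) (Fin N) ℝ)
    (hB : IsUnit B.det) (u v : Fin N → ℝ) :
    (B + vecMulVec u v).det = B.det * (1 + v ⬝ᵥ (B⁻¹ *ᵥ u)) := by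
  rw [vecMulVec_eq Unit, Matrix.det_add_replicateCol_mul_replicateRow hB]
  congr 1
  rw [Matrix.mul_assoc, ← Matrix.replicateCol_mulVec, det_unique]
  simp [Matrix.replicateRow_mul_replicateCol_apply]

private lemma posSemidef_vecMulVec' {N : ℕ} (u : Fin N → ℝ) :
    (vecMulVec u u).PosSemidef := by
  have h := Matrix.posSemidef_self_mul_conjTranspose (Matrix.replicateCol Unit u)
  rwa [Matrix.conjTranspose_replicateCol, star_trivial, ← Matrix.vecMulVec_eq] at h

private lemma trace_eq_sum_eigenvalues' {N : ℕ} {B : Matrix (Fin N) (Fin N) ℝ}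
    (hB : B.IsHermitian) : B.trace = ∑ i, hB.eigenvalues i := by
  conv_lhs => rw [hB.spectral_theorem]
  rw [Unitary.conjStarAlgAut_apply, Matrix.trace_mul_cycle, Unitary.coe_star_mul_self, one_mul,
    Matrix.trace_diagonal]
  simp

private lemma det_le_trace_div_pow' {N : ℕ} (hN : 1 ≤ N) {B : Matrix (Fin N) (Fin N) ℝ}
    (hB : B.PosDef) : B.det ≤ (B.trace / N) ^ N := by
  have hH := hB.isHermitian
  have hNR : (0:ℝ) < N := by exact_mod_cast hN
  have hev : ∀ i, 0 ≤ hH.eigenvalues i := fun i => (hB.eigenvalues_pos i).le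
  have hgm := Real.geom_mean_le_arith_mean_weighted Finset.univ
      (fun _ => (N:ℝ)⁻¹) hH.eigenvalues (fun _ _ => by positivity)
      (by simp [Finset.card_univ, mul_comm]; field_simp) (fun i _ => hev i)
  have hdet : B.det = (∏ i, hH.eigenvalues i ^ ((N:ℝ)⁻¹)) ^ N := by
    rw [← Finset.prod_pow]
    rw [hH.det_eq_prod_eigenvalues]
    refine Finset.prod_congr rfl fun i _ => ?_
    rw [← Real.rpow_natCast (hH.eigenvalues i ^ ((N:ℝ)⁻¹)) N, ← Real.rpow_mul (hev i),
      inv_mul_cancel₀ hNR.ne', Real.rpow_one]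
    rfl
  rw [hdet, trace_eq_sum_eigenvalues' hH]
  refine pow_le_pow_left₀ (Finset.prod_nonneg fun i _ => Real.rpow_nonneg (hev i) _) ?_ N
  calc ∏ i, hH.eigenvalues i ^ ((N:ℝ)⁻¹) ≤ ∑ i, (N:ℝ)⁻¹ * hH.eigenvalues i := hgm
    _ = (∑ i, hH.eigenvalues i) / N := by rw [← Finset.mul_sum]; ring

theorem soba_log_det_bound
    (N T : ℕ) (hN : 1 ≤ N) (a : ℝ) (ha : 0 < a)
    (z : ℕ → Fin N → ℝ)
    (n : ℕ → ℝ) (hn : ∀ t, n t = 0 ∨ n t = 1)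
    (A : ℕ → Matrix (Fin N) (Fin N) ℝ)
    (hA0 : A 0 = a • (1 : Matrix (Fin N) (Fin N) ℝ))
    (hA : ∀ t, A (t + 1) = A t + n t • Matrix.vecMulVec (z t) (z t)) :
    ∑ t ∈ Finset.range T, n t * (z t ⬝ᵥ ((A (t + 1))⁻¹ *ᵥ z t))
        ≤ Real.log ((A T).det / a ^ N)
      ∧ Real.log ((A T).det / a ^ N)
        ≤ N * Real.log (1 + (∑ t ∈ Finset.range T, n t * (z t ⬝ᵥ z t)) / (a * N)) := by
  have hNR : (0:ℝ) < N := by exact_mod_cast hN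
  have hpos : ∀ t, (A t).PosDef := by
    intro t
    induction t with
    | zero =>
      rw [hA0, smul_one_eq_diagonal]
      exact Matrix.posDef_diagonal_iff.mpr fun _ => ha
    | succ t ih =>
      rcases hn t with h | h
      · rw [hA t, h, zero_smul, add_zero]; exact ih
      · rw [hA t, h, one_smul]; exact ih.add_posSemidef (posSemidef_vecMulVec' _)
  have hdetpos : ∀ t, 0 < (A t).det := fun t => (hpos t).det_pos
  have hdet0 : (A 0).det = a ^ N := by
    rw [hA0, det_smul, det_one, mul_one, Fintype.card_fin]
  have haN : (0:ℝ) < a ^ N := pow_pos ha N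
  have htr : (A T).trace = N * a + ∑ t ∈ Finset.range T, n t * (z t ⬝ᵥ z t) := by
    induction T with
    | zero => simp [hA0, trace_smul, trace_one, smul_eq_mul, mul_comm]
    | succ T ih =>
      rw [hA T, trace_add, trace_smul, ih, Finset.sum_range_succ,
        vecMulVec_eq Unit, trace_replicateCol_mul_replicateRow, smul_eq_mul]
      ring
  have hlog : Real.log ((A T).det / a ^ N)
      = Real.log (A T).det - Real.log (A 0).det := by
    rw [Real.log_div (hdetpos T).ne' haN.ne', hdet0]
  constructor
  · have hstep : ∀ t, n t * (z t ⬝ᵥ ((A (t + 1))⁻¹ *ᵥ z t))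
        ≤ Real.log (A (t+1)).det - Real.log (A t).det := by
      intro t
      rcases hn t with h | h
      · have hAe : A (t+1) = A t := by rw [hA t, h, zero_smul, add_zero]
        rw [h, hAe]; simp
      · have hAe : A (t+1) = A t + vecMulVec (z t) (z t) := by rw [hA t, h, one_smul]
        have hAt : A t = A (t+1) + vecMulVec (-(z t)) (z t) := by
          rw [hAe]; ext i j; simp [vecMulVec]
        have hdet : (A t).det = (A (t+1)).det * (1 - z t ⬝ᵥ ((A (t+1))⁻¹ *ᵥ z t)) := by
          rw [hAt, det_add_vecMulVec' _ (isUnit_iff_ne_zero.mpr (hdetpos (t+1)).ne') _ _,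
            mulVec_neg, dotProduct_neg]
          ring
        set q := z t ⬝ᵥ ((A (t + 1))⁻¹ *ᵥ z t) with hq
        have h1q : (A t).det / (A (t+1)).det = 1 - q := by
          rw [hdet, mul_comm, mul_div_assoc, div_self (hdetpos (t+1)).ne', mul_one]
        have hx : (0:ℝ) < (A t).det / (A (t+1)).det :=
          div_pos (hdetpos t) (hdetpos (t+1))
        have hlb := Real.log_le_sub_one_of_pos hx
        rw [Real.log_div (hdetpos t).ne' (hdetpos (t+1)).ne'] at hlb
        rw [h, one_mul]
        linarith [h1q, hlb]
    calc ∑ t ∈ Finset.range T, n t * (z t ⬝ᵥ ((A (t + 1))⁻¹ *ᵥ z t))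
        ≤ ∑ t ∈ Finset.range T, (Real.log (A (t+1)).det - Real.log (A t).det) :=
          Finset.sum_le_sum fun t _ => hstep t
      _ = Real.log (A T).det - Real.log (A 0).det :=
          Finset.sum_range_sub (fun t => Real.log (A t).det) T
      _ = Real.log ((A T).det / a ^ N) := hlog.symm
  · have hS : (A T).trace / (a * N) = 1 + (∑ t ∈ Finset.range T, n t * (z t ⬝ᵥ z t)) / (a * N) := by
      rw [htr]
      field_simp
    calc Real.log ((A T).det / a ^ N)
        ≤ Real.log (((A T).trace / N) ^ N / a ^ N) := by
          apply Real.log_le_log (div_pos (hdetpos T) haN)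
          gcongr
          exact det_le_trace_div_pow' hN (hpos T)
      _ = N * Real.log (1 + (∑ t ∈ Finset.range T, n t * (z t ⬝ᵥ z t)) / (a * N)) := by
          rw [← div_pow, div_div, mul_comm (N:ℝ) a, hS, Real.log_pow]
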